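/- Let V be a finite-dimensional complex normed vector space and let g, h be commuting unipotent linear automorphisms of V (i.e., g − id and h − id are nilpotent) with g ≠ id. Then there exists M ≥ 1 such that for all m ∈ ℕ and all N ∈ ℕ, |{n ∈ ℕ : ‖h^m g^n‖ ≤ N}| ≤ M N, where ‖·‖ denotes the operator norm. -/

import Mathlib

theorem commuting_unipotent_counting
    {V : Type*} [NormedAddCommGroup V] [NormedSpace ℂ V] [FiniteDimensional ℂ V]
    (g h : V →L[ℂ] V)
    (hgu : IsNilpotent (g - 1)) (hhu : IsNilpotent (h - 1))
    (hcomm : Commute g h) (hg : g ≠ 1) :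
    ∃ M : ℝ, 1 ≤ M ∧ ∀ m N : ℕ, 1 ≤ m → 1 ≤ N →
      ∀ s : Finset ℕ, (∀ n ∈ s, 1 ≤ n ∧ ‖h ^ m * g ^ n‖ ≤ (N : ℝ)) →
        (s.card : ℝ) ≤ M * N := by
  classical
  set u : V →L[ℂ] V := g - 1 with hu
  set w : V →L[ℂ] V := h - 1 with hw
  have hune : u ≠ 0 := fun h0 => hg (sub_eq_zero.mp h0)
  have hex : ∃ D, u ^ D = 0 := hgu
  -- get l with u^(l+1) ≠ 0, u^(l+2) = 0
  obtain ⟨l, hl1, hl2⟩ : ∃ l, u ^ (l + 1) ≠ 0 ∧ u ^ (l + 2) = 0 := by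
    have h0 := Nat.find_spec hex
    have hE0 : Nat.find hex ≠ 0 := by
      intro hE
      rw [hE, pow_zero] at h0
      exact hune (by rw [← mul_one u, h0, mul_zero])
    have hE1 : Nat.find hex ≠ 1 := by
      intro hE; rw [hE, pow_one] at h0; exact hune h0
    refine ⟨Nat.find hex - 2, Nat.find_min hex (by omega), ?_⟩
    have h2 : Nat.find hex - 2 + 2 = Nat.find hex := by omega
    rw [h2]; exact h0
  have hcuh : Commute u h := hcomm.sub_left (Commute.one_left h)
  have hcw : Commute u w := hcuh.sub_right (Commute.one_right u)
  -- find v0 with u^(l+1) v0 ≠ 0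
  obtain ⟨v0, hv0⟩ : ∃ v0, (u ^ (l + 1)) v0 ≠ 0 := by
    by_contra hc
    push_neg at hc
    exact hl1 (ContinuousLinearMap.ext fun x => by simpa using hc x)
  obtain ⟨Dw, hDw⟩ : ∃ Dw, w ^ Dw = 0 := hhu
  set z := (u ^ (l + 1)) v0 with hz
  have hexw : ∃ j, (w ^ j) z = 0 := ⟨Dw, by rw [hDw]; rfl⟩
  have hJ := Nat.find_spec hexw
  have hJ0 : Nat.find hexw ≠ 0 := by
    intro hE
    rw [hE, pow_zero] at hJ
    exact hv0 hJ
  set i := Nat.find hexw - 1 with hi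
  have hiy : (w ^ i) z ≠ 0 := Nat.find_min hexw (by omega)
  have hiy0 : (w ^ (i + 1)) z = 0 := by
    have h2 : i + 1 = Nat.find hexw := by omega
    rw [h2]; exact hJ
  set v := (w ^ i) v0 with hv
  have hyz : (u ^ (l + 1)) v = (w ^ i) z := by
    have hco : u ^ (l + 1) * w ^ i = w ^ i * u ^ (l + 1) := (hcw.pow_pow _ _).eq
    calc (u ^ (l + 1)) ((w ^ i) v0) = (u ^ (l + 1) * w ^ i) v0 := rfl
      _ = (w ^ i * u ^ (l + 1)) v0 := by rw [hco]
      _ = (w ^ i) z := rfl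
  set y := (u ^ (l + 1)) v with hy
  have hy0 : y ≠ 0 := by rw [hyz]; exact hiy
  have hwy : w y = 0 := by
    rw [hyz]
    have : w ((w ^ i) z) = (w ^ (i + 1)) z := by rw [pow_succ']; rfl
    rw [this, hiy0]
  have hhy : h y = y := by
    have h1 : w y = h y - y := by rw [hw]; rfl
    rw [h1] at hwy
    linear_combination (norm := abel) hwy
  have hpowy : ∀ m : ℕ, (h ^ m) y = y := by
    intro m
    induction m with
    | zero => rfl
    | succ m ih => rw [pow_succ', ContinuousLinearMap.mul_apply, ih, hhy]
  -- key binomial identity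
  have hg1 : g = 1 + u := by rw [hu]; abel
  have key : ∀ n : ℕ, u ^ l * g ^ n = u ^ l + n • u ^ (l + 1) := by
    intro n
    induction n with
    | zero => simp
    | succ n ih =>
      rw [pow_succ, ← mul_assoc, ih, hg1, mul_add, mul_one, add_mul,
          smul_mul_assoc, ← pow_succ, ← pow_succ, hl2, smul_zero, succ_nsmul]
      abel
  have main : ∀ m n : ℕ, (u ^ l) ((h ^ m * g ^ n) v)
      = (h ^ m) ((u ^ l) v) + n • y := by
    intro m n
    have h1 : u ^ l * (h ^ m * g ^ n) = h ^ m * u ^ l + n • (h ^ m * u ^ (l + 1)) := by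
      rw [← mul_assoc, (hcuh.pow_pow l m).eq, mul_assoc, key, mul_add, mul_smul_comm]
    calc (u ^ l) ((h ^ m * g ^ n) v) = (u ^ l * (h ^ m * g ^ n)) v := rfl
      _ = (h ^ m * u ^ l + n • (h ^ m * u ^ (l + 1))) v := by rw [h1]
      _ = (h ^ m) ((u ^ l) v) + n • ((h ^ m) y) := by
          simp [ContinuousLinearMap.add_apply, ContinuousLinearMap.smul_apply,
            ContinuousLinearMap.mul_apply]
          rw [hy]; simp [pow_succ]
      _ = (h ^ m) ((u ^ l) v) + n • y := by rw [hpowy]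
  obtain ⟨φ, hφ1, hφy⟩ := exists_dual_vector ℂ y (norm_ne_zero_iff.mpr hy0)
  have hynorm : (0 : ℝ) < ‖y‖ := norm_pos_iff.mpr hy0
  set C : ℝ := ‖u ^ l‖ * ‖v‖ with hC
  have hC0 : 0 ≤ C := by positivity
  have hM0 : (0:ℝ) ≤ 2 * C / ‖y‖ := by positivity
  refine ⟨2 * C / ‖y‖ + 1, by linarith, ?_⟩
  intro m N hm hN s hs
  have hN1 : (1:ℝ) ≤ (N:ℝ) := by exact_mod_cast hN
  rcases s.eq_empty_or_nonempty with rfl | hne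
  · simp only [Finset.card_empty, Nat.cast_zero]
    positivity
  set A : ℝ := (φ ((h ^ m) ((u ^ l) v))).re with hA
  have hbound : ∀ n ∈ s, |A + (n : ℝ) * ‖y‖| ≤ C * N := by
    intro n hn
    obtain ⟨hn1, hnN⟩ := hs n hn
    have heq : φ ((u ^ l) ((h ^ m * g ^ n) v))
        = φ ((h ^ m) ((u ^ l) v)) + (n : ℂ) * (‖y‖ : ℂ) := by
      rw [main m n, map_add, map_nsmul, hφy, nsmul_eq_mul]
      norm_num [RCLike.ofReal_alg]
    have hre : (φ ((u ^ l) ((h ^ m * g ^ n) v))).re = A + (n : ℝ) * ‖y‖ := by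
      rw [heq]
      simp [Complex.add_re, Complex.mul_re, hA]
    have h1 : |(φ ((u ^ l) ((h ^ m * g ^ n) v))).re|
        ≤ ‖φ ((u ^ l) ((h ^ m * g ^ n) v))‖ := Complex.abs_re_le_norm _
    have h2 : ‖φ ((u ^ l) ((h ^ m * g ^ n) v))‖ ≤ C * N := by
      calc ‖φ ((u ^ l) ((h ^ m * g ^ n) v))‖
          ≤ ‖φ‖ * ‖(u ^ l) ((h ^ m * g ^ n) v)‖ := φ.le_opNorm _
        _ = ‖(u ^ l) ((h ^ m * g ^ n) v)‖ := by rw [hφ1, one_mul]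
        _ ≤ ‖u ^ l‖ * ‖(h ^ m * g ^ n) v‖ := (u ^ l).le_opNorm _
        _ ≤ ‖u ^ l‖ * (‖h ^ m * g ^ n‖ * ‖v‖) := by
            gcongr
            exact (h ^ m * g ^ n).le_opNorm v
        _ ≤ ‖u ^ l‖ * ((N : ℝ) * ‖v‖) := by
            gcongr
        _ = C * N := by rw [hC]; ring
    rw [hre] at h1
    exact h1.trans h2
  set a := s.min' hne with ha
  set b := s.max' hne with hb
  have hab : a ≤ b := s.min'_le _ (s.max'_mem hne)
  have hcard : s.card ≤ b - a + 1 := by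
    calc s.card ≤ (Finset.Icc a b).card := Finset.card_le_card
          (fun x hx => Finset.mem_Icc.mpr ⟨s.min'_le x hx, s.le_max' x hx⟩)
      _ = b + 1 - a := Nat.card_Icc a b
      _ ≤ b - a + 1 := by omega
  have hba : ((b : ℝ) - (a : ℝ)) * ‖y‖ ≤ 2 * (C * N) := by
    have h1 := hbound a (s.min'_mem hne)
    have h2 := hbound b (s.max'_mem hne)
    have h1' := (abs_le.mp h1).1
    have h2' := (abs_le.mp h2).2
    nlinarith
  have hba' : (b : ℝ) - (a : ℝ) ≤ 2 * C / ‖y‖ * N := by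
    rw [div_mul_eq_mul_div, le_div_iff₀ hynorm]
    calc ((b:ℝ) - a) * ‖y‖ ≤ 2 * (C * N) := hba
      _ = 2 * C * N := by ring
  calc (s.card : ℝ) ≤ ((b - a + 1 : ℕ) : ℝ) := by exact_mod_cast hcard
    _ = (b : ℝ) - (a : ℝ) + 1 := by
        push_cast [Nat.cast_sub hab]
        ring
    _ ≤ 2 * C / ‖y‖ * N + 1 := by linarith
    _ ≤ 2 * C / ‖y‖ * N + N := by linarith
    _ = (2 * C / ‖y‖ + 1) * N := by ring
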